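/- Let h : ℝ × [p₀,0] → ℝ be twice continuously differentiable and 1-periodic in its first variable q, and suppose that λ²·∂_{pp}h(q,p) + a(p)^{-2}·∂_{qq}h(q,p) − 3·λ²·γ(p)·a(p)^{-2}·∂_p h(q,p) = 0 for all (q,p) ∈ ℝ × [p₀,0]. Then for every natural number k the Fourier coefficient h_k(p) := ∫_0^1 h(q,p)·cos(2kπq) dq defines a twice continuously differentiable function on [p₀,0] which satisfies λ²·(a³·h_k')'(p) = (2kπ)²·a(p)·h_k(p) for all p ∈ [p₀,0]. -/

import Mathlib

open Real Set MeasureTheory Filter Topology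

noncomputable def dI (p₀ : ℝ) (f : ℝ → ℝ) : ℝ → ℝ :=
  derivWithin f (Set.Icc p₀ 0)

lemma sliceDeriv {p₀ : ℝ} (hp₀ : p₀ < 0) {F : ℝ × ℝ → ℝ}
    (hF : ContDiffOn ℝ 1 F ((univ : Set ℝ) ×ˢ Icc p₀ 0)) (q : ℝ) {p : ℝ} (hp : p ∈ Icc p₀ 0) :
    HasDerivWithinAt (fun p' => F (q, p'))
      (fderivWithin ℝ F ((univ : Set ℝ) ×ˢ Icc p₀ 0) (q, p) (0, 1)) (Icc p₀ 0) p := by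
  have hmem : (q, p) ∈ (univ : Set ℝ) ×ˢ Icc p₀ 0 := ⟨mem_univ q, hp⟩
  have hd := (hF.differentiableOn one_ne_zero (q, p) hmem).hasFDerivWithinAt
  have hφ : HasDerivWithinAt (fun p' : ℝ => ((q, p') : ℝ × ℝ)) ((0 : ℝ), (1 : ℝ)) (Icc p₀ 0) p := by
    simpa using (hasDerivWithinAt_const p (Icc p₀ 0) q).prodMk (hasDerivWithinAt_id p (Icc p₀ 0))
  exact hd.comp_hasDerivWithinAt p hφ (fun x hx => ⟨mem_univ q, hx⟩)

lemma contIntegral {p₀ : ℝ} (c : ℝ) {F : ℝ → ℝ → ℝ}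
    (hFc : ContinuousOn (fun z : ℝ × ℝ => F z.1 z.2) ((univ : Set ℝ) ×ˢ Icc p₀ 0)) :
    ContinuousOn (fun p => ∫ q in (0:ℝ)..1, F q p * Real.cos (c * q)) (Icc p₀ 0) := by
  obtain ⟨M, hM⟩ := (isCompact_Icc.prod isCompact_Icc).exists_bound_of_continuousOn
      (hFc.mono (prod_mono (subset_univ (Icc (0:ℝ) 1)) Subset.rfl))
  intro p hp
  apply intervalIntegral.continuousWithinAt_of_dominated_interval (bound := fun _ => M)
  · filter_upwards [eventually_mem_nhdsWithin] with x hx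
    have hq : Continuous fun q => F q x :=
      hFc.comp_continuous (continuous_id.prodMk continuous_const) (fun q => ⟨mem_univ q, hx⟩)
    exact (hq.mul (by continuity)).aestronglyMeasurable.restrict
  · filter_upwards [eventually_mem_nhdsWithin] with x hx
    refine Filter.Eventually.of_forall (fun q hq => ?_)
    have hqm : ((q, x) : ℝ × ℝ) ∈ Icc (0:ℝ) 1 ×ˢ Icc p₀ 0 := ⟨Ioc_subset_Icc_self (by rwa [uIoc_of_le (zero_le_one' ℝ)] at hq), hx⟩
    calc ‖F q x * Real.cos (c * q)‖ = ‖F q x‖ * ‖Real.cos (c * q)‖ := norm_mul _ _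
      _ ≤ M * 1 := mul_le_mul (hM _ hqm) (by simpa using Real.abs_cos_le_one (c*q))
            (norm_nonneg _) (le_trans (norm_nonneg _) (hM _ hqm))
      _ = M := mul_one M
  · exact intervalIntegrable_const
  · refine Filter.Eventually.of_forall (fun q hq => ?_)
    have : ContinuousWithinAt (fun x => F q x) (Icc p₀ 0) p :=
      (hFc.comp ((continuous_const.prodMk continuous_id).continuousOn)
        (fun t ht => ⟨mem_univ q, ht⟩)) p hp
    exact this.mul continuousWithinAt_const

lemma paramHasDerivWithinAt {p₀ : ℝ} (hp₀ : p₀ < 0) (c : ℝ) {F F' : ℝ → ℝ → ℝ}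
    (hFc : ContinuousOn (fun z : ℝ × ℝ => F z.1 z.2) ((univ : Set ℝ) ×ˢ Icc p₀ 0))
    (hF'c : ContinuousOn (fun z : ℝ × ℝ => F' z.1 z.2) ((univ : Set ℝ) ×ˢ Icc p₀ 0))
    (hd : ∀ q : ℝ, ∀ p ∈ Icc p₀ 0, HasDerivWithinAt (F q) (F' q p) (Icc p₀ 0) p)
    {p : ℝ} (hp : p ∈ Icc p₀ 0) :
    HasDerivWithinAt (fun p' => ∫ q in (0:ℝ)..1, F q p' * Real.cos (c * q))
      (∫ q in (0:ℝ)..1, F' q p * Real.cos (c * q)) (Icc p₀ 0) p := by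
  have hcosc : Continuous fun q : ℝ => Real.cos (c * q) :=
    Real.continuous_cos.comp (continuous_const.mul continuous_id)
  have gcont : ContinuousOn (fun t => ∫ q in (0:ℝ)..1, F' q t * Real.cos (c * q)) (Icc p₀ 0) :=
    contIntegral c hF'c
  have hFq : ∀ p1 ∈ Icc p₀ 0, Continuous fun q => F q p1 := fun p1 hp1 =>
    hFc.comp_continuous (continuous_id.prodMk continuous_const) (fun q => ⟨mem_univ q, hp1⟩)
  have hF't : ∀ q : ℝ, ContinuousOn (fun t => F' q t) (Icc p₀ 0) := fun q =>
    hF'c.comp ((continuous_const.prodMk continuous_id).continuousOn)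
      (fun t ht => ⟨mem_univ q, ht⟩)
  -- the representation via FTC-2 and Fubini
  have hrep : ∀ p1 ∈ Icc p₀ 0,
      (∫ q in (0:ℝ)..1, F q p1 * Real.cos (c * q))
        = (∫ q in (0:ℝ)..1, F q p₀ * Real.cos (c * q))
          + ∫ t in p₀..p1, (∫ q in (0:ℝ)..1, F' q t * Real.cos (c * q)) := by
    intro p1 hp1
    have hIccsub : Icc p₀ p1 ⊆ Icc p₀ 0 := Icc_subset_Icc_right hp1.2
    have hFtc : ∀ q : ℝ, (∫ t in p₀..p1, F' q t) = F q p1 - F q p₀ := by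
      intro q
      apply intervalIntegral.integral_eq_sub_of_hasDeriv_right_of_le hp1.1
      · exact fun t ht => ((hd q t (hIccsub ht)).continuousWithinAt).mono hIccsub
      · intro t ht
        have hti : Icc p₀ 0 ∈ 𝓝 t := Icc_mem_nhds ht.1 (lt_of_lt_of_le ht.2 hp1.2)
        exact (((hd q t (hIccsub (Ioo_subset_Icc_self ht))).hasDerivAt hti)).hasDerivWithinAt
      · exact ContinuousOn.intervalIntegrable
          (by rw [uIcc_of_le hp1.1]; exact (hF't q).mono hIccsub)
    have int1 : IntervalIntegrable (fun q => F q p1 * Real.cos (c * q)) volume 0 1 :=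
      ((hFq p1 hp1).mul hcosc).intervalIntegrable 0 1
    have int0 : IntervalIntegrable (fun q => F q p₀ * Real.cos (c * q)) volume 0 1 :=
      ((hFq p₀ (left_mem_Icc.mpr hp₀.le)).mul hcosc).intervalIntegrable 0 1
    have hsub : (∫ q in (0:ℝ)..1, F q p1 * Real.cos (c * q))
        - (∫ q in (0:ℝ)..1, F q p₀ * Real.cos (c * q))
        = ∫ q in (0:ℝ)..1, (F q p1 * Real.cos (c * q) - F q p₀ * Real.cos (c * q)) :=
      (intervalIntegral.integral_sub int1 int0).symm
    have hpt : ∀ q : ℝ, F q p1 * Real.cos (c * q) - F q p₀ * Real.cos (c * q)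
        = ∫ t in p₀..p1, F' q t * Real.cos (c * q) := by
      intro q
      rw [intervalIntegral.integral_mul_const, hFtc q]; ring
    have hswap : (∫ q in (0:ℝ)..1, ∫ t in p₀..p1, F' q t * Real.cos (c * q))
        = ∫ t in p₀..p1, ∫ q in (0:ℝ)..1, F' q t * Real.cos (c * q) := by
      have hcont2 : ContinuousOn (fun z : ℝ × ℝ => F' z.1 z.2 * Real.cos (c * z.1))
          (Icc (0:ℝ) 1 ×ˢ Icc p₀ p1) := by
        refine ContinuousOn.mul (hF'c.mono ?_) ((hcosc.comp continuous_fst).continuousOn)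
        exact prod_mono (subset_univ _) hIccsub
      have hint : Integrable (Function.uncurry fun q t => F' q t * Real.cos (c * q))
          ((volume.restrict (Ioc (0:ℝ) 1)).prod (volume.restrict (Ioc p₀ p1))) := by
        rw [Measure.prod_restrict]
        exact (hcont2.integrableOn_compact (isCompact_Icc.prod isCompact_Icc)).mono_set
          (prod_mono Ioc_subset_Icc_self Ioc_subset_Icc_self)
      simp only [intervalIntegral.integral_of_le hp1.1,
        intervalIntegral.integral_of_le (zero_le_one' ℝ)]
      exact MeasureTheory.integral_integral_swap hint
    rw [intervalIntegral.integral_congr (fun q _ => hpt q)] at hsub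
    rw [hswap] at hsub
    linarith
  -- FTC-1
  haveI : Fact (p ∈ Icc p₀ 0) := ⟨hp⟩
  have hgint : IntervalIntegrable (fun t => ∫ q in (0:ℝ)..1, F' q t * Real.cos (c * q))
      volume p₀ p := ContinuousOn.intervalIntegrable
    (by rw [uIcc_of_le hp.1]; exact gcont.mono (Icc_subset_Icc_right hp.2))
  have hΦ : HasDerivWithinAt (fun u => ∫ t in p₀..u, ∫ q in (0:ℝ)..1, F' q t * Real.cos (c * q))
      (∫ q in (0:ℝ)..1, F' q p * Real.cos (c * q)) (Icc p₀ 0) p :=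
    intervalIntegral.integral_hasDerivWithinAt_right hgint
      (gcont.stronglyMeasurableAtFilter_nhdsWithin measurableSet_Icc p) (gcont p hp)
  have hfinal := (hasDerivWithinAt_const p (Icc p₀ 0)
      (∫ q in (0:ℝ)..1, F q p₀ * Real.cos (c * q))).add hΦ
  rw [zero_add] at hfinal
  exact hfinal.congr (fun x hx => hrep x hx) (hrep p hp)
theorem fourier_coefficients_satisfy_sturm_liouville
    (p₀ lam : ℝ) (hp₀ : p₀ < 0) (hlam : 0 < lam)
    (a : ℝ → ℝ) (ha : ContDiffOn ℝ 1 a (Icc p₀ 0))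
    (hapos : ∀ p ∈ Icc p₀ 0, 0 < a p)
    (γ : ℝ → ℝ) (hγ : ∀ p ∈ Icc p₀ 0, γ p = -(a p * dI p₀ a p))
    (h : ℝ → ℝ → ℝ)
    (hsmooth : ContDiffOn ℝ 2 (fun z : ℝ × ℝ => h z.1 z.2)
      ((univ : Set ℝ) ×ˢ Icc p₀ 0))
    (hper : ∀ q p : ℝ, h (q + 1) p = h q p)
    (hpde : ∀ q : ℝ, ∀ p ∈ Icc p₀ 0,
      lam ^ 2 * dI p₀ (fun p' => dI p₀ (h q) p') p
        + (a p ^ 2)⁻¹ * deriv (fun q' => deriv (fun q'' => h q'' p) q') q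
        - 3 * lam ^ 2 * γ p * (a p ^ 2)⁻¹ * dI p₀ (h q) p = 0) :
    ∀ k : ℕ,
      ContDiffOn ℝ 2
        (fun p => ∫ q in (0:ℝ)..1, h q p * Real.cos (2 * k * π * q))
        (Icc p₀ 0) ∧
      ∀ p ∈ Icc p₀ 0,
        lam ^ 2 * dI p₀ (fun p' => a p' ^ 3 *
            dI p₀ (fun p'' => ∫ q in (0:ℝ)..1, h q p'' * Real.cos (2 * k * π * q)) p') p
          = (2 * k * π) ^ 2 * a p
              * ∫ q in (0:ℝ)..1, h q p * Real.cos (2 * k * π * q) := by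
  intro k
  set c : ℝ := 2 * (k : ℝ) * π with hc
  have husd : UniqueDiffOn ℝ (Icc p₀ 0) := uniqueDiffOn_Icc hp₀
  have hPud : UniqueDiffOn ℝ ((univ : Set ℝ) ×ˢ Icc p₀ 0) := uniqueDiffOn_univ.prod husd
  have hF1 : ContDiffOn ℝ 1 (fun z : ℝ × ℝ => h z.1 z.2) ((univ : Set ℝ) ×ˢ Icc p₀ 0) :=
    hsmooth.of_le one_le_two
  -- identification of the slice p-derivative with the joint one
  have hHpEq : ∀ q : ℝ, ∀ p ∈ Icc p₀ 0, dI p₀ (h q) p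
      = fderivWithin ℝ (fun z : ℝ × ℝ => h z.1 z.2) ((univ : Set ℝ) ×ˢ Icc p₀ 0) (q, p) (0, 1) :=
    fun q p hp => (sliceDeriv hp₀ hF1 q hp).derivWithin (husd p hp)
  have hG1 : ContDiffOn ℝ 1 (fun z : ℝ × ℝ =>
      fderivWithin ℝ (fun z : ℝ × ℝ => h z.1 z.2) ((univ : Set ℝ) ×ˢ Icc p₀ 0) z (0, 1))
      ((univ : Set ℝ) ×ˢ Icc p₀ 0) :=
    (hsmooth.fderivWithin hPud (by norm_num)).clm_apply contDiffOn_const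
  have hHppEq : ∀ q : ℝ, ∀ p ∈ Icc p₀ 0, dI p₀ (fun p' => dI p₀ (h q) p') p
      = fderivWithin ℝ (fun z : ℝ × ℝ =>
          fderivWithin ℝ (fun z : ℝ × ℝ => h z.1 z.2) ((univ : Set ℝ) ×ˢ Icc p₀ 0) z (0, 1))
          ((univ : Set ℝ) ×ˢ Icc p₀ 0) (q, p) (0, 1) := by
    intro q p hp
    have h1 : dI p₀ (fun p' => dI p₀ (h q) p') p
        = derivWithin (fun p' => fderivWithin ℝ (fun z : ℝ × ℝ => h z.1 z.2)
            ((univ : Set ℝ) ×ˢ Icc p₀ 0) (q, p') (0, 1)) (Icc p₀ 0) p :=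
      derivWithin_congr (fun x hx => hHpEq q x hx) (hHpEq q p hp)
    rw [h1]
    exact (sliceDeriv hp₀ hG1 q hp).derivWithin (husd p hp)
  -- joint continuity
  have hHpc : ContinuousOn (fun z : ℝ × ℝ => dI p₀ (h z.1) z.2) ((univ : Set ℝ) ×ˢ Icc p₀ 0) :=
    hG1.continuousOn.congr (fun z hz => hHpEq z.1 z.2 hz.2)
  have hHppc : ContinuousOn (fun z : ℝ × ℝ => dI p₀ (fun p' => dI p₀ (h z.1) p') z.2)
      ((univ : Set ℝ) ×ˢ Icc p₀ 0) := by
    refine ContinuousOn.congr ?_ (fun z hz => hHppEq z.1 z.2 hz.2)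
    exact ((hG1.fderivWithin (m := 0) hPud (by norm_num)).clm_apply contDiffOn_const).continuousOn
  -- slice smoothness and within-derivative facts
  have hq2 : ∀ q : ℝ, ContDiffOn ℝ 2 (h q) (Icc p₀ 0) := fun q =>
    hsmooth.comp ((contDiff_const.prodMk contDiff_id).contDiffOn) (fun x hx => ⟨mem_univ q, hx⟩)
  have hD1 : ∀ q : ℝ, ∀ p ∈ Icc p₀ 0, HasDerivWithinAt (h q) (dI p₀ (h q) p) (Icc p₀ 0) p :=
    fun q p hp => ((hq2 q).differentiableOn two_ne_zero p hp).hasDerivWithinAt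
  have hD2 : ∀ q : ℝ, ∀ p ∈ Icc p₀ 0, HasDerivWithinAt (fun p' => dI p₀ (h q) p')
      (dI p₀ (fun p' => dI p₀ (h q) p') p) (Icc p₀ 0) p := by
    intro q p hp
    have h1 : ContDiffOn ℝ 1 (derivWithin (h q) (Icc p₀ 0)) (Icc p₀ 0) :=
      (hq2 q).derivWithin husd (by norm_num)
    exact ((h1.differentiableOn one_ne_zero) p hp).hasDerivWithinAt
  -- differentiation under the integral sign
  have hf0d : ∀ p ∈ Icc p₀ 0, HasDerivWithinAt
      (fun p' => ∫ q in (0:ℝ)..1, h q p' * Real.cos (c * q))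
      (∫ q in (0:ℝ)..1, dI p₀ (h q) p * Real.cos (c * q)) (Icc p₀ 0) p := fun p hp =>
    paramHasDerivWithinAt hp₀ c (F := h) (F' := fun q p => dI p₀ (h q) p)
      hsmooth.continuousOn hHpc hD1 hp
  have hf1d : ∀ p ∈ Icc p₀ 0, HasDerivWithinAt
      (fun p' => ∫ q in (0:ℝ)..1, dI p₀ (h q) p' * Real.cos (c * q))
      (∫ q in (0:ℝ)..1, dI p₀ (fun p' => dI p₀ (h q) p') p * Real.cos (c * q)) (Icc p₀ 0) p :=
    fun p hp => paramHasDerivWithinAt hp₀ c (F := fun q p => dI p₀ (h q) p)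
      (F' := fun q p => dI p₀ (fun p' => dI p₀ (h q) p') p) hHpc hHppc hD2 hp
  have hder0 : ∀ p ∈ Icc p₀ 0,
      dI p₀ (fun p' => ∫ q in (0:ℝ)..1, h q p' * Real.cos (c * q)) p
        = ∫ q in (0:ℝ)..1, dI p₀ (h q) p * Real.cos (c * q) :=
    fun p hp => (hf0d p hp).derivWithin (husd p hp)
  have hder1 : ∀ p ∈ Icc p₀ 0,
      dI p₀ (fun p' => ∫ q in (0:ℝ)..1, dI p₀ (h q) p' * Real.cos (c * q)) p
        = ∫ q in (0:ℝ)..1, dI p₀ (fun p' => dI p₀ (h q) p') p * Real.cos (c * q) :=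
    fun p hp => (hf1d p hp).derivWithin (husd p hp)
  constructor
  · -- C² smoothness
    have h11 : ContDiffOn ℝ (1+1)
        (fun p => ∫ q in (0:ℝ)..1, h q p * Real.cos (c * q)) (Icc p₀ 0) := by
      rw [contDiffOn_succ_iff_derivWithin husd]
      refine ⟨fun p hp => (hf0d p hp).differentiableWithinAt, by simp, ?_⟩
      have h01 : ContDiffOn ℝ (0+1)
          (fun p => ∫ q in (0:ℝ)..1, dI p₀ (h q) p * Real.cos (c * q)) (Icc p₀ 0) := by
        rw [contDiffOn_succ_iff_derivWithin husd]
        refine ⟨fun p hp => (hf1d p hp).differentiableWithinAt, by simp, ?_⟩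
        rw [contDiffOn_zero]
        refine ContinuousOn.congr (contIntegral c hHppc) (fun p hp => hder1 p hp)
      exact ((h01.of_le (by norm_num)).congr (fun p hp => hder0 p hp))
    exact h11.of_le (by norm_num)
  · -- the Sturm-Liouville equation
    intro p hp
    have ha0 : a p ≠ 0 := (hapos p hp).ne'
    have hslice : ContDiff ℝ 2 (fun q => h q p) := by
      rw [← contDiffOn_univ]
      exact hsmooth.comp ((contDiff_id.prodMk contDiff_const).contDiffOn)
        (fun x _ => ⟨mem_univ x, hp⟩)
    have hdiffq : Differentiable ℝ (fun q => h q p) := hslice.differentiable two_ne_zero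
    have hcd1 : ContDiff ℝ 1 (deriv (fun q'' => h q'' p)) :=
      (contDiff_succ_iff_deriv.mp (hslice.of_le (by norm_num))).2.2
    have hHqd : ∀ x : ℝ, HasDerivAt (fun q => h q p) (deriv (fun q'' => h q'' p) x) x :=
      fun x => (hdiffq x).hasDerivAt
    have hHqqd : ∀ x : ℝ, HasDerivAt (fun q' => deriv (fun q'' => h q'' p) q')
        (deriv (fun q' => deriv (fun q'' => h q'' p) q') x) x :=
      fun x => ((hcd1.differentiable one_ne_zero) x).hasDerivAt
    have hw10 : deriv (fun q'' => h q'' p) 1 = deriv (fun q'' => h q'' p) 0 := by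
      have hfun : (fun q => h q p) = fun q => h (q + 1) p := funext fun q => (hper q p).symm
      have e := deriv_comp_add_const (fun y => h y p) 1 0
      calc deriv (fun q'' => h q'' p) 1 = deriv (fun y => h y p) (0 + 1) := by norm_num
        _ = deriv (fun q => h (q + 1) p) 0 := e.symm
        _ = deriv (fun q => h q p) 0 := by rw [← hfun]
    have hsinc : Real.sin c = 0 := by
      rw [hc]
      have e : 2 * (k:ℝ) * π = ((2 * k : ℕ) : ℝ) * π := by push_cast; ring
      rw [e]; exact Real.sin_nat_mul_pi (2*k)
    have e1 : Real.cos (c*1) = 1 := by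
      rw [mul_one, hc]
      have e : 2 * (k:ℝ) * π = (k:ℝ) * (2 * π) := by ring
      rw [e]; exact_mod_cast Real.cos_nat_mul_two_pi k
    have e2 : Real.cos (c*0) = 1 := by rw [mul_zero, Real.cos_zero]
    have e3 : Real.sin (c*1) = 0 := by rw [mul_one]; exact hsinc
    have e4 : Real.sin (c*0) = 0 := by rw [mul_zero, Real.sin_zero]
    have hcosc : Continuous fun q : ℝ => Real.cos (c*q) :=
      Real.continuous_cos.comp (continuous_const.mul continuous_id)
    have hsinc' : Continuous fun q : ℝ => Real.sin (c*q) :=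
      Real.continuous_sin.comp (continuous_const.mul continuous_id)
    have hHqqc : Continuous (deriv (fun q' => deriv (fun q'' => h q'' p) q')) :=
      hcd1.continuous_deriv le_rfl
    have hHqc : Continuous (deriv (fun q'' => h q'' p)) := hcd1.continuous
    have hHpq : Continuous fun q => dI p₀ (h q) p :=
      hHpc.comp_continuous (continuous_id.prodMk continuous_const) (fun q => ⟨mem_univ q, hp⟩)
    have hu : ∀ x : ℝ, HasDerivAt (fun q => Real.cos (c*q)) (-Real.sin (c*x) * c) x := fun x => by
      simpa using ((hasDerivAt_id x).const_mul c).cos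
    have hu2 : ∀ x : ℝ, HasDerivAt (fun q => -Real.sin (c*q) * c) (-(Real.cos (c*x) * c) * c) x :=
      fun x => by
        have := (((hasDerivAt_id x).const_mul c).sin).neg.mul_const c
        simpa using this
    have ibp1 : (∫ x in (0:ℝ)..1,
          Real.cos (c*x) * (deriv (fun q' => deriv (fun q'' => h q'' p) q') x))
        = Real.cos (c*1) * deriv (fun q'' => h q'' p) 1
          - Real.cos (c*0) * deriv (fun q'' => h q'' p) 0
          - ∫ x in (0:ℝ)..1, (-Real.sin (c*x) * c) * deriv (fun q'' => h q'' p) x :=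
      intervalIntegral.integral_mul_deriv_eq_deriv_mul (fun x _ => hu x) (fun x _ => hHqqd x)
        ((hsinc'.neg.mul continuous_const).intervalIntegrable 0 1)
        (hHqqc.intervalIntegrable 0 1)
    have ibp2 : (∫ x in (0:ℝ)..1, (-Real.sin (c*x) * c) * deriv (fun q'' => h q'' p) x)
        = (-Real.sin (c*1) * c) * h 1 p - (-Real.sin (c*0) * c) * h 0 p
          - ∫ x in (0:ℝ)..1, (-(Real.cos (c*x) * c) * c) * h x p :=
      intervalIntegral.integral_mul_deriv_eq_deriv_mul (fun x _ => hu2 x) (fun x _ => hHqd x)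
        (((hcosc.mul continuous_const).neg.mul continuous_const).intervalIntegrable 0 1)
        (hHqc.intervalIntegrable 0 1)
    have hlast : (∫ x in (0:ℝ)..1, (-(Real.cos (c*x) * c) * c) * h x p)
        = -(c^2) * ∫ x in (0:ℝ)..1, h x p * Real.cos (c*x) := by
      rw [← intervalIntegral.integral_const_mul]
      exact intervalIntegral.integral_congr (fun x _ => by ring)
    have hibp : (∫ q in (0:ℝ)..1,
          deriv (fun q' => deriv (fun q'' => h q'' p) q') q * Real.cos (c*q))
        = -(c^2) * ∫ q in (0:ℝ)..1, h q p * Real.cos (c*q) := by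
      rw [intervalIntegral.integral_congr
        (g := fun q => Real.cos (c*q) * deriv (fun q' => deriv (fun q'' => h q'' p) q') q)
        (fun q _ => mul_comm _ _)]
      rw [ibp1, hw10, ibp2, hlast, e1, e2, e3, e4]
      ring
    have int1 : IntervalIntegrable (fun q => 3*lam^2*γ p*(a p^2)⁻¹
        * (dI p₀ (h q) p * Real.cos (c*q))) volume 0 1 :=
      (continuous_const.mul (hHpq.mul hcosc)).intervalIntegrable 0 1
    have int2 : IntervalIntegrable (fun q => (a p^2)⁻¹
        * (deriv (fun q' => deriv (fun q'' => h q'' p) q') q * Real.cos (c*q))) volume 0 1 :=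
      (continuous_const.mul (hHqqc.mul hcosc)).intervalIntegrable 0 1
    have hkey : lam^2 * (∫ q in (0:ℝ)..1, dI p₀ (fun p' => dI p₀ (h q) p') p * Real.cos (c*q))
        = 3*lam^2*γ p*(a p^2)⁻¹ * (∫ q in (0:ℝ)..1, dI p₀ (h q) p * Real.cos (c*q))
          + (a p^2)⁻¹ * (c^2 * (∫ q in (0:ℝ)..1, h q p * Real.cos (c*q))) := by
      have hpt : ∀ q : ℝ, lam^2 * (dI p₀ (fun p' => dI p₀ (h q) p') p * Real.cos (c*q))
          = 3*lam^2*γ p*(a p^2)⁻¹ * (dI p₀ (h q) p * Real.cos (c*q))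
            - (a p^2)⁻¹ * (deriv (fun q' => deriv (fun q'' => h q'' p) q') q * Real.cos (c*q)) := by
        intro q
        have e := hpde q p hp
        linear_combination Real.cos (c*q) * e
      rw [← intervalIntegral.integral_const_mul,
        intervalIntegral.integral_congr (fun q _ => hpt q),
        intervalIntegral.integral_sub int1 int2,
        intervalIntegral.integral_const_mul, intervalIntegral.integral_const_mul, hibp]
      ring
    have haD : HasDerivWithinAt a (dI p₀ a p) (Icc p₀ 0) p :=
      (ha.differentiableOn one_ne_zero p hp).hasDerivWithinAt
    have hAcongr : dI p₀ (fun p' => a p' ^ 3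
          * dI p₀ (fun p'' => ∫ q in (0:ℝ)..1, h q p'' * Real.cos (c * q)) p') p
        = derivWithin (fun p' => a p' ^ 3
            * (∫ q in (0:ℝ)..1, dI p₀ (h q) p' * Real.cos (c * q))) (Icc p₀ 0) p :=
      derivWithin_congr (fun x hx => by rw [hder0 x hx]) (by rw [hder0 p hp])
    have hprod : HasDerivWithinAt
        (fun p' => a p' ^ 3 * (∫ q in (0:ℝ)..1, dI p₀ (h q) p' * Real.cos (c * q)))
        ((((3:ℕ):ℝ) * a p ^ (3-1) * dI p₀ a p)
            * (∫ q in (0:ℝ)..1, dI p₀ (h q) p * Real.cos (c * q))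
          + a p ^ 3 * (∫ q in (0:ℝ)..1, dI p₀ (fun p' => dI p₀ (h q) p') p * Real.cos (c * q)))
        (Icc p₀ 0) p :=
      (haD.pow 3).mul (hf1d p hp)
    have hval := hprod.derivWithin (husd p hp)
    rw [hγ p hp] at hkey
    rw [hAcongr, hval]
    have hinv : a p ^ 2 * (a p ^ 2)⁻¹ = 1 := mul_inv_cancel₀ (pow_ne_zero 2 ha0)
    linear_combination (a p ^ 3) * hkey
      + (c ^ 2 * a p * (∫ q in (0:ℝ)..1, h q p * Real.cos (c * q))
        - 3 * lam ^ 2 * a p ^ 2 * dI p₀ a p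
          * (∫ q in (0:ℝ)..1, dI p₀ (h q) p * Real.cos (c * q))) * hinv
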